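/- arXiv:2010.04219 — 2 statements merged into one kernel-verified Lean document; each statement's English description precedes it below -/
import Mathlib

section
/- Fix u > 0 and |x| < 2, and let m₊(x) = x/2 − i√(4−x²)/2. Then 1 − u² m₊(x)² = 1 + u² − u²x²/2 + i u² x √(4−x²)/2, and the derivative in x of arg(1 − u² m₊(x)²) equals (2u⁴ + 2u² − u²x²) / (√(4−x²)(−u²x² + u⁴ + 2u² + 1)). -/
open Complex

/-- Boundary value from above of the semicircle Stieltjes transform, for `|x| < 2`. -/
noncomputable def mPlus (x : ℝ) : ℂ := (x : ℂ) / 2 - Complex.I * (Real.sqrt (4 - x ^ 2) : ℝ) / 2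

lemma mPlus_form (u x : ℝ) (hx2 : x ^ 2 < 4) :
    1 - (u : ℂ) ^ 2 * (mPlus x) ^ 2
        = ((1 + u ^ 2 - u ^ 2 * x ^ 2 / 2 : ℝ) : ℂ)
            + Complex.I * ((u ^ 2 * x * Real.sqrt (4 - x ^ 2) / 2 : ℝ) : ℂ) := by
  have hs2 : ((Real.sqrt (4 - x ^ 2) : ℝ) : ℂ) ^ 2 = 4 - (x : ℂ) ^ 2 := by
    rw [← Complex.ofReal_pow, Real.sq_sqrt (by linarith)]
    push_cast; ring
  rw [mPlus]
  push_cast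
  linear_combination ((u : ℂ) ^ 2 / 4) * hs2 +
    (-((u : ℂ) ^ 2 * ((Real.sqrt (4 - x ^ 2) : ℝ) : ℂ) ^ 2 / 4)) * Complex.I_sq

theorem stmt_10 (u x : ℝ) (hu : 0 < u) (hx : |x| < 2) :
    1 - (u : ℂ) ^ 2 * (mPlus x) ^ 2
        = 1 + (u ^ 2 : ℝ) - ((u ^ 2 * x ^ 2 / 2 : ℝ) : ℂ)
            + Complex.I * ((u ^ 2 * x * Real.sqrt (4 - x ^ 2) / 2 : ℝ) : ℂ) ∧
      deriv (fun y : ℝ => Complex.arg (1 - (u : ℂ) ^ 2 * (mPlus y) ^ 2)) x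
        = (2 * u ^ 4 + 2 * u ^ 2 - u ^ 2 * x ^ 2)
            / (Real.sqrt (4 - x ^ 2) * (-(u ^ 2 * x ^ 2) + u ^ 4 + 2 * u ^ 2 + 1)) := by
  obtain ⟨hx1, hx2'⟩ := abs_lt.mp hx
  have hx2 : x ^ 2 < 4 := by nlinarith
  set s : ℝ := Real.sqrt (4 - x ^ 2) with hsdef
  have hs2 : s ^ 2 = 4 - x ^ 2 := Real.sq_sqrt (by linarith)
  have hs : 0 < s := Real.sqrt_pos.mpr (by linarith)
  have hsC : ((s : ℝ) : ℂ) ^ 2 = 4 - (x : ℂ) ^ 2 := by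
    rw [← Complex.ofReal_pow, hs2]; push_cast; ring
  have hform := mPlus_form u x hx2
  refine ⟨by rw [hform]; push_cast; ring, ?_⟩
  -- derivative of y ↦ sqrt (4 - y^2)
  have hds : HasDerivAt (fun y : ℝ => Real.sqrt (4 - y ^ 2)) (-x / s) x := by
    have h1 : HasDerivAt (fun y : ℝ => 4 - y ^ 2) (-(2 * x)) x := by
      simpa using ((hasDerivAt_pow 2 x).const_sub 4)
    have h2 := (Real.hasDerivAt_sqrt (by nlinarith : 4 - x ^ 2 ≠ 0)).comp x h1
    have h3 : -x / s = 1 / (2 * Real.sqrt (4 - x ^ 2)) * -(2 * x) := by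
      rw [← hsdef]
      field_simp
    rw [h3]; exact h2
  -- derivative of mPlus
  have hm : HasDerivAt (fun y : ℝ => mPlus y)
      ((1 : ℂ) / 2 + Complex.I * ((x / s : ℝ) : ℂ) / 2) x := by
    have h1 : HasDerivAt (fun y : ℝ => ((y : ℂ)) / 2) ((1 : ℂ) / 2) x := by
      simpa using (hasDerivAt_id x).ofReal_comp.div_const 2
    have h2 : HasDerivAt (fun y : ℝ => Complex.I * ((Real.sqrt (4 - y ^ 2) : ℝ) : ℂ) / 2)
        (Complex.I * ((-x / s : ℝ) : ℂ) / 2) x :=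
      (hds.ofReal_comp.const_mul Complex.I).div_const 2
    have h3 := h1.sub h2
    have e : (1 : ℂ) / 2 + Complex.I * ((x / s : ℝ) : ℂ) / 2
        = 1 / 2 - Complex.I * ((-x / s : ℝ) : ℂ) / 2 := by
      push_cast
      ring
    rw [e]; exact h3
  -- derivative of f
  have hf : HasDerivAt (fun y : ℝ => 1 - (u : ℂ) ^ 2 * (mPlus y) ^ 2)
      (-((u : ℂ) ^ 2 * (((1 : ℂ) / 2 + Complex.I * ((x / s : ℝ) : ℂ) / 2) * mPlus x
          + mPlus x * ((1 : ℂ) / 2 + Complex.I * ((x / s : ℝ) : ℂ) / 2)))) x := by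
    have h0 := ((hm.mul hm).const_mul ((u : ℂ) ^ 2)).const_sub 1
    simpa only [← pow_two, Pi.pow_apply] using h0
  -- the derivative value in A' + I B' form
  have hfd : -((u : ℂ) ^ 2 * (((1 : ℂ) / 2 + Complex.I * ((x / s : ℝ) : ℂ) / 2) * mPlus x
          + mPlus x * ((1 : ℂ) / 2 + Complex.I * ((x / s : ℝ) : ℂ) / 2)))
      = ((-(u ^ 2 * x) : ℝ) : ℂ) + Complex.I * ((u ^ 2 * (2 - x ^ 2) / s : ℝ) : ℂ) := by
    rw [mPlus, ← hsdef]
    have hsne : ((s : ℝ) : ℂ) ≠ 0 := by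
      simpa using Complex.ofReal_ne_zero.mpr hs.ne'
    have hinv : (((s : ℝ) : ℂ))⁻¹ * ((s : ℝ) : ℂ) = 1 := inv_mul_cancel₀ hsne
    push_cast
    linear_combination (Complex.I * (u:ℂ) ^ 2 * (((s : ℝ) : ℂ))⁻¹ / 2) * hsC
      + ((u:ℂ) ^ 2 * (x:ℂ) / 2) * Complex.I_sq
      + (-(Complex.I * (u:ℂ) ^ 2 * ((s : ℝ) : ℂ) / 2)) * hinv
      + ((u:ℂ) ^ 2 * Complex.I ^ 2 * (x:ℂ) / 2) * hinv
  -- membership in the slit plane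
  have hmem : 1 - (u : ℂ) ^ 2 * (mPlus x) ^ 2 ∈ Complex.slitPlane := by
    rw [Complex.mem_slitPlane_iff, hform]
    rcases eq_or_ne x 0 with hx0 | hx0
    · left
      subst hx0
      simp only [Complex.add_re, Complex.mul_re, Complex.I_re, Complex.I_im,
        Complex.ofReal_re, Complex.ofReal_im, zero_mul, mul_zero, one_mul,
        sub_zero, add_zero, zero_sub, neg_zero]
      norm_num
      positivity
    · right
      simp only [Complex.add_im, Complex.ofReal_im, Complex.mul_im, Complex.I_re, Complex.I_im,
        Complex.ofReal_re, zero_add, one_mul, zero_mul, sub_zero, mul_zero]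
      rw [← hsdef]
      have : u ^ 2 * x * s / 2 ≠ 0 := by
        apply div_ne_zero _ two_ne_zero
        exact mul_ne_zero (mul_ne_zero (by positivity) hx0) hs.ne'
      simpa using this
  -- derivative of log ∘ f, then arg = im ∘ log
  have hlog := hf.clog_real hmem
  have harg : HasDerivAt (fun y : ℝ => Complex.arg (1 - (u : ℂ) ^ 2 * (mPlus y) ^ 2))
      (((((-(u ^ 2 * x) : ℝ) : ℂ) + Complex.I * ((u ^ 2 * (2 - x ^ 2) / s : ℝ) : ℂ))
        / (((1 + u ^ 2 - u ^ 2 * x ^ 2 / 2 : ℝ) : ℂ)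
            + Complex.I * ((u ^ 2 * x * s / 2 : ℝ) : ℂ))).im) x := by
    rw [← hfd, ← hform]
    have h4 := Complex.imCLM.hasFDerivAt.comp_hasDerivAt x hlog
    simpa only [Function.comp_def, Complex.imCLM_apply, Complex.log_im] using h4
  rw [harg.deriv, Complex.div_im]
  simp only [Complex.add_re, Complex.add_im, Complex.mul_re, Complex.mul_im, Complex.I_re,
    Complex.I_im, Complex.ofReal_re, Complex.ofReal_im, Complex.normSq_apply, zero_mul, one_mul,
    mul_zero, sub_zero, zero_add, zero_sub, add_zero]
  have hD : (0 : ℝ) < -(u ^ 2 * x ^ 2) + u ^ 4 + 2 * u ^ 2 + 1 := by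
    nlinarith [sq_nonneg (1 - u ^ 2), sq_nonneg u, sq_nonneg x, mul_pos (mul_pos hu hu) (mul_pos hu hu)]
  have hN : (1 + u ^ 2 - u ^ 2 * x ^ 2 / 2) * (1 + u ^ 2 - u ^ 2 * x ^ 2 / 2)
      + u ^ 2 * x * s / 2 * (u ^ 2 * x * s / 2)
      = -(u ^ 2 * x ^ 2) + u ^ 4 + 2 * u ^ 2 + 1 := by
    linear_combination (u ^ 4 * x ^ 2 / 4) * hs2
  rw [hN]
  rw [div_sub_div_same, div_eq_div_iff hD.ne' (by positivity)]
  field_simp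
  linear_combination (u ^ 2 * x ^ 2 * (u ^ 2 * (-x ^ 2 + u ^ 2 + 2) + 1)) * hs2
end

section
/- Let 0 < u ≤ 1 and η > 0, and define q(v) = −u²v⁴ − (1 − u²)v³ + (5 + u²)v² − (u² + 4η² + 7)v + 3. Then q is strictly decreasing on [0,1], q(0) = 3 > 0, q(1) = −4η² < 0, and hence q has exactly one root in (0,1). -/
theorem stmt_15 (u η : ℝ) (hu : 0 < u) (hu1 : u ≤ 1) (hη : 0 < η) :
    StrictAntiOn
        (fun v : ℝ => -u ^ 2 * v ^ 4 - (1 - u ^ 2) * v ^ 3 + (5 + u ^ 2) * v ^ 2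
          - (u ^ 2 + 4 * η ^ 2 + 7) * v + 3)
        (Set.Icc 0 1) ∧
      (-u ^ 2 * (0:ℝ) ^ 4 - (1 - u ^ 2) * (0:ℝ) ^ 3 + (5 + u ^ 2) * (0:ℝ) ^ 2
          - (u ^ 2 + 4 * η ^ 2 + 7) * 0 + 3 = 3) ∧
      (-u ^ 2 * (1:ℝ) ^ 4 - (1 - u ^ 2) * (1:ℝ) ^ 3 + (5 + u ^ 2) * (1:ℝ) ^ 2
          - (u ^ 2 + 4 * η ^ 2 + 7) * 1 + 3 = -4 * η ^ 2) ∧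
      (∃! v : ℝ, v ∈ Set.Ioo (0:ℝ) 1 ∧
        -u ^ 2 * v ^ 4 - (1 - u ^ 2) * v ^ 3 + (5 + u ^ 2) * v ^ 2
          - (u ^ 2 + 4 * η ^ 2 + 7) * v + 3 = 0) := by
  set f : ℝ → ℝ := fun v : ℝ => -u ^ 2 * v ^ 4 - (1 - u ^ 2) * v ^ 3 + (5 + u ^ 2) * v ^ 2
      - (u ^ 2 + 4 * η ^ 2 + 7) * v + 3 with hf
  have hanti : StrictAntiOn f (Set.Icc 0 1) := by
    apply strictAntiOn_of_deriv_neg (convex_Icc 0 1)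
    · fun_prop
    · intro v hv
      rw [interior_Icc] at hv
      obtain ⟨hv0, hv1⟩ := hv
      have hd : HasDerivAt f (-4 * u ^ 2 * v ^ 3 - 3 * (1 - u ^ 2) * v ^ 2
          + 2 * (5 + u ^ 2) * v - (u ^ 2 + 4 * η ^ 2 + 7)) v := by
        have h := (((((hasDerivAt_pow 4 v).const_mul (-u^2)).sub
          ((hasDerivAt_pow 3 v).const_mul (1-u^2))).add
          ((hasDerivAt_pow 2 v).const_mul (5+u^2))).sub
          ((hasDerivAt_id v).const_mul (u^2+4*η^2+7))).add_const 3
        exact h.congr_deriv (by push_cast; ring)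
      have hderiv : deriv f v = -4 * u ^ 2 * v ^ 3 - 3 * (1 - u ^ 2) * v ^ 2
          + 2 * (5 + u ^ 2) * v - (u ^ 2 + 4 * η ^ 2 + 7) := hd.deriv
      rw [hderiv]
      have hs1 : u ^ 2 ≤ 1 := by nlinarith
      have hB : u ^ 2 * (4 * v ^ 2 + v - 1) + 3 * v - 7 < 0 := by
        nlinarith [mul_nonneg (sub_nonneg.mpr hs1) (mul_nonneg hv0.le (sub_pos.mpr hv1).le),
          mul_nonneg (sub_nonneg.mpr hs1) hv0.le, mul_pos (sub_pos.mpr hv1) hv0,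
          sq_nonneg (1 - v), mul_nonneg (sub_nonneg.mpr hs1) (sub_pos.mpr hv1).le]
      nlinarith [mul_neg_of_pos_of_neg (sub_pos.mpr hv1) hB, sq_nonneg η]
  have hf0 : f 0 = 3 := by simp [hf]
  have hf1 : f 1 = -4 * η ^ 2 := by simp [hf]; ring
  refine ⟨hanti, by norm_num, by rw [hf] at hf1; simpa using hf1, ?_⟩
  have hcont : ContinuousOn f (Set.Icc (0:ℝ) 1) := by fun_prop
  have hmem : (0:ℝ) ∈ Set.Ioo (f 1) (f 0) := by
    rw [hf0, hf1]; constructor <;> nlinarith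
  obtain ⟨v, hv, hfv⟩ := intermediate_value_Ioo' (by norm_num) hcont hmem
  refine ⟨v, ⟨hv, hfv⟩, ?_⟩
  rintro w ⟨hw, hfw⟩
  have hfw' : f w = 0 := hfw
  exact hanti.injOn (Set.mem_Icc_of_Ioo hw) (Set.mem_Icc_of_Ioo hv) (hfw'.trans hfv.symm)
end
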